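/- arXiv:1811.06571 — 2 statements merged into one kernel-verified Lean document; each statement's English description precedes it below -/
import Mathlib

section
/- Let L_1 denote the real Banach space L^1([0,1]) with Lebesgue measure. Suppose T ∈ L(L_1), S ∈ L(L_1) is weakly compact, and ε > 0 satisfies d(T(B_{L_1}), S(B_{L_1})) < ε, where B_{L_1} is the closed unit ball of L_1. Then there exists T_1 ∈ L(L_1) such that ‖T − T_1‖ < ε and T_1(B_{L_1}) is contained in the norm closure of S(B_{L_1}). -/
open MeasureTheory Metric

noncomputable section

/-- Lebesgue measure on `[0,1]`. -/
abbrev μ01 : Measure ℝ := volume.restrict (Set.Icc 0 1)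

instance : IsProbabilityMeasure μ01 :=
  ⟨by rw [Measure.restrict_apply_univ, Real.volume_Icc]; norm_num⟩

/-- `L₁ = L¹([0,1])`. -/
abbrev L1 := Lp ℝ 1 μ01

/-- `T` is weakly compact: the closure of the image of the closed unit ball
is compact in the weak topology of the codomain. -/
def IsWeaklyCompactOp {X Y : Type*} [NormedAddCommGroup X] [NormedSpace ℝ X]
    [NormedAddCommGroup Y] [NormedSpace ℝ Y] (T : X →L[ℝ] Y) : Prop :=
  IsCompact (closure ((fun x => toWeakSpace ℝ Y (T x)) '' closedBall 0 1))

/-- The (non-symmetric) distance `d(A,B) = sup_{x ∈ A} inf_{y ∈ B} ‖x - y‖`. -/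
def setDist' {X : Type*} [NormedAddCommGroup X] (A B : Set X) : ℝ :=
  sSup ((fun x => sInf ((fun y => ‖x - y‖) '' B)) '' A)

open Set Filter

instance (X : Type*) [NormedAddCommGroup X] [NormedSpace ℝ X] :
    ContinuousSMul ℝ (WeakSpace ℝ X) :=
  inferInstanceAs (ContinuousSMul ℝ (WeakBilin (topDualPairing ℝ X).flip))

namespace StepAux

open scoped Classical

/-- A finite a.e.-partition of `[0,1]` into positive-measure measurable sets. -/
structure Pt where
  C : Finset (Set ℝ)
  meas : ∀ A ∈ C, MeasurableSet A
  pos : ∀ A ∈ C, 0 < μ01 A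
  disj : (C : Set (Set ℝ)).PairwiseDisjoint id
  cover : μ01 (⋃₀ (C : Set (Set ℝ)))ᶜ = 0

/-- Normalized indicator. -/
def hA {A : Set ℝ} (hm : MeasurableSet A) : L1 :=
  indicatorConstLp 1 hm (measure_ne_top _ _) ((μ01 A).toReal⁻¹)

lemma toReal_pos {A : Set ℝ} (hp : 0 < μ01 A) : 0 < (μ01 A).toReal :=
  ENNReal.toReal_pos hp.ne' (measure_ne_top _ _)

lemma norm_hA {A : Set ℝ} (hm : MeasurableSet A) (hp : 0 < μ01 A) : ‖hA hm‖ = 1 := by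
  rw [hA, norm_indicatorConstLp one_ne_zero ENNReal.one_ne_top]
  have h0 : (0:ℝ) < (μ01 A).toReal := toReal_pos hp
  rw [Real.norm_eq_abs, abs_of_nonneg (inv_nonneg.2 h0.le)]
  simp only [ENNReal.toReal_one, div_one, Real.rpow_one]
  exact inv_mul_cancel₀ h0.ne'

lemma coeFn_sum {ι : Type*} (s : Finset ι) (g : ι → L1) :
    ⇑(∑ i ∈ s, g i) =ᵐ[μ01] fun x => ∑ i ∈ s, g i x := by
  classical
  induction s using Finset.induction_on with
  | empty =>
    simp only [Finset.sum_empty]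
    exact Lp.coeFn_zero ℝ 1 μ01
  | @insert a s hni ih =>
    filter_upwards [Lp.coeFn_add (g a) (∑ i ∈ s, g i), ih] with x hx hx2
    rw [Finset.sum_insert hni, Finset.sum_insert hni, hx, Pi.add_apply, hx2]

def Pconst (P : Pt) (f : L1) : Prop :=
  ∀ A ∈ P.C, ∃ c : ℝ, ∀ᵐ x ∂(μ01.restrict A), f x = c


lemma integral_eq_of_const {A : Set ℝ} {f : L1} {c : ℝ}
    (hc : ∀ᵐ x ∂(μ01.restrict A), f x = c) :
    ∫ x in A, f x ∂μ01 = c * (μ01 A).toReal := by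
  rw [integral_congr_ae hc, setIntegral_const, smul_eq_mul, mul_comm]
  rfl

set_option maxHeartbeats 1000000 in
lemma repr (P : Pt) (f : L1) (hf : Pconst P f) :
    f = ∑ A ∈ P.C.attach, (∫ x in (A : Set ℝ), f x ∂μ01) • hA (P.meas A A.2) := by
  classical
  choose c hc using hf
  apply Lp.ext
  have hcover : ∀ᵐ x ∂μ01, x ∈ ⋃₀ (P.C : Set (Set ℝ)) := by
    refine ae_iff.2 ?_
    exact P.cover
  have hconst : ∀ᵐ x ∂μ01, ∀ A ∈ P.C.attach, x ∈ (A : Set ℝ) → f x = c A A.2 := by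
    rw [eventually_all_finset]
    exact fun A _ => ae_imp_of_ae_restrict (hc A A.2)
  have h_ind : ∀ᵐ x ∂μ01, ∀ A ∈ P.C.attach,
      ((∫ y in (A : Set ℝ), f y ∂μ01) • hA (P.meas A A.2) : L1) x =
        (A : Set ℝ).indicator
          (fun _ => (∫ y in (A : Set ℝ), f y ∂μ01) * (μ01 (A : Set ℝ)).toReal⁻¹) x := by
    rw [eventually_all_finset]
    intro A _
    filter_upwards [Lp.coeFn_smul (∫ y in (A : Set ℝ), f y ∂μ01) (hA (P.meas A A.2)),
      (indicatorConstLp_coeFn (p := 1) (hs := P.meas A A.2)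
        (hμs := measure_ne_top μ01 A) (c := (μ01 (A : Set ℝ)).toReal⁻¹))] with x h1 h2
    simp only [hA] at h1 ⊢
    rw [h1, Pi.smul_apply, h2, smul_eq_mul]
    by_cases hx : x ∈ (A : Set ℝ)
    · rw [Set.indicator_of_mem hx, Set.indicator_of_mem hx]
    · rw [Set.indicator_of_notMem hx, Set.indicator_of_notMem hx, mul_zero]
  have hsum := coeFn_sum P.C.attach
    (fun A => (∫ y in (A : Set ℝ), f y ∂μ01) • hA (P.meas A A.2))
  filter_upwards [hcover, hconst, h_ind, hsum] with x hx1 hx2 hx3 hx4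
  obtain ⟨A₀, hA₀C, hxA₀⟩ := hx1
  have hA₀C' : A₀ ∈ P.C := hA₀C
  rw [hx4, Finset.sum_congr rfl hx3,
    Finset.sum_eq_single_of_mem (⟨A₀, hA₀C'⟩ : {x // x ∈ P.C}) (Finset.mem_attach _ _)
      (fun B _ hBne => ?_), Set.indicator_of_mem hxA₀,
    integral_eq_of_const (hc A₀ hA₀C'), hx2 ⟨A₀, hA₀C'⟩ (Finset.mem_attach _ _) hxA₀]
  · have h0 : (μ01 A₀).toReal ≠ 0 := (toReal_pos (P.pos A₀ hA₀C')).ne'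
    rw [mul_assoc, mul_inv_cancel₀ h0, mul_one]
  · have hvalne : (B : Set ℝ) ≠ A₀ := fun h => hBne (Subtype.ext h)
    have hdisj : Disjoint (B : Set ℝ) A₀ := P.disj B.2 hA₀C' hvalne
    have hxB : x ∉ (B : Set ℝ) := fun hxB => (Set.disjoint_left.1 hdisj hxB) hxA₀
    exact Set.indicator_of_notMem hxB _


lemma sum_abs_integral_le (P : Pt) (f : L1) :
    ∑ A ∈ P.C.attach, |∫ x in (A : Set ℝ), f x ∂μ01| ≤ ‖f‖ := by
  classical
  have hint : Integrable (fun x => ‖f x‖) μ01 := (L1.integrable_coeFn f).norm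
  have h1 : ∀ A ∈ P.C.attach, |∫ x in (A : Set ℝ), f x ∂μ01|
      ≤ ∫ x in (A : Set ℝ), ‖f x‖ ∂μ01 := fun A _ => by
    simpa [Real.norm_eq_abs] using
      norm_integral_le_integral_norm (μ := μ01.restrict (A : Set ℝ)) (f := fun x => f x)
  refine le_trans (Finset.sum_le_sum h1) ?_
  have h2 : ∫ x in (⋃ A ∈ P.C.attach, (A : Set ℝ)), ‖f x‖ ∂μ01
      = ∑ A ∈ P.C.attach, ∫ x in (A : Set ℝ), ‖f x‖ ∂μ01 := by
    refine integral_biUnion_finset P.C.attach (fun A _ => P.meas A A.2) ?_ ?_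
    · intro i _ j _ hne
      exact P.disj i.2 j.2 (fun h => hne (Subtype.ext h))
    · exact fun i _ => hint.integrableOn
  rw [← h2, L1.norm_eq_integral_norm]
  exact setIntegral_le_integral hint (Eventually.of_forall fun x => norm_nonneg _)

/-- Common refinement of two partitions. -/
def refinePt (P Q : Pt) : Pt where
  C := (Finset.image₂ (fun A B => A ∩ B) P.C Q.C).filter (fun s => 0 < μ01 s)
  meas := by
    intro s hs
    rw [Finset.mem_filter, Finset.mem_image₂] at hs
    obtain ⟨⟨A, hA, B, hB, rfl⟩, -⟩ := hs
    exact (P.meas A hA).inter (Q.meas B hB)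
  pos := fun s hs => (Finset.mem_filter.1 hs).2
  disj := by
    intro s hs t ht hne
    rw [Finset.mem_coe, Finset.mem_filter, Finset.mem_image₂] at hs ht
    obtain ⟨⟨A, hA, B, hB, rfl⟩, -⟩ := hs
    obtain ⟨⟨A', hA', B', hB', rfl⟩, -⟩ := ht
    by_cases hAA : A = A'
    · subst hAA
      have hBB : B ≠ B' := fun h => hne (by rw [h])
      exact ((Q.disj hB hB' hBB).mono Set.inter_subset_right Set.inter_subset_right :)
    · exact ((P.disj hA hA' hAA).mono Set.inter_subset_left Set.inter_subset_left :)
  cover := by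
    classical
    set Cnew := (Finset.image₂ (fun A B => A ∩ B) P.C Q.C).filter (fun s => 0 < μ01 s) with hC
    set bad := (Finset.image₂ (fun A B => A ∩ B) P.C Q.C).filter (fun s => ¬ 0 < μ01 s) with hbad
    have hsub : (⋃₀ (Cnew : Set (Set ℝ)))ᶜ ⊆
        (⋃₀ (P.C : Set (Set ℝ)))ᶜ ∪ (⋃₀ (Q.C : Set (Set ℝ)))ᶜ ∪ ⋃₀ (bad : Set (Set ℝ)) := by
      intro x hx
      by_cases hxP : x ∈ ⋃₀ (P.C : Set (Set ℝ))
      · by_cases hxQ : x ∈ ⋃₀ (Q.C : Set (Set ℝ))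
        · obtain ⟨A, hA, hxA⟩ := hxP
          obtain ⟨B, hB, hxB⟩ := hxQ
          have hmem : A ∩ B ∈ Finset.image₂ (fun A B => A ∩ B) P.C Q.C :=
            Finset.mem_image₂.2 ⟨A, hA, B, hB, rfl⟩
          by_cases hpos : 0 < μ01 (A ∩ B)
          · exact absurd ⟨A ∩ B, Finset.mem_filter.2 ⟨hmem, hpos⟩, hxA, hxB⟩ hx
          · exact Or.inr ⟨A ∩ B, Finset.mem_coe.2 (Finset.mem_filter.2 ⟨hmem, hpos⟩), hxA, hxB⟩
        · exact Or.inl (Or.inr hxQ)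
      · exact Or.inl (Or.inl hxP)
    refine measure_mono_null hsub ?_
    refine measure_union_null (measure_union_null P.cover Q.cover) ?_
    rw [Set.sUnion_eq_biUnion]
    refine (measure_biUnion_null_iff bad.countable_toSet).2 ?_
    intro s hs
    have := (Finset.mem_filter.1 (Finset.mem_coe.1 hs)).2
    exact le_antisymm (not_lt.1 this) zero_le |>.symm ▸ rfl

lemma pconst_refine_left {P : Pt} (Q : Pt) {f : L1} (h : Pconst P f) :
    Pconst (refinePt P Q) f := by
  intro s hs
  rw [refinePt] at hs
  simp only [Finset.mem_filter, Finset.mem_image₂] at hs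
  obtain ⟨⟨A, hA, B, hB, rfl⟩, -⟩ := hs
  obtain ⟨c, hc⟩ := h A hA
  exact ⟨c, ae_restrict_of_ae_restrict_of_subset Set.inter_subset_left hc⟩

lemma pconst_refine_right (P : Pt) {Q : Pt} {f : L1} (h : Pconst Q f) :
    Pconst (refinePt P Q) f := by
  intro s hs
  rw [refinePt] at hs
  simp only [Finset.mem_filter, Finset.mem_image₂] at hs
  obtain ⟨⟨A, hA, B, hB, rfl⟩, -⟩ := hs
  obtain ⟨c, hc⟩ := h B hB
  exact ⟨c, ae_restrict_of_ae_restrict_of_subset Set.inter_subset_right hc⟩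

/-- The partition induced by a simple function. -/
def ptOfSimple (g : SimpleFunc ℝ ℝ) : Pt where
  C := (g.range.image (fun c => g ⁻¹' {c})).filter (fun s => 0 < μ01 s)
  meas := by
    intro s hs
    rw [Finset.mem_filter, Finset.mem_image] at hs
    obtain ⟨⟨c, -, rfl⟩, -⟩ := hs
    exact g.measurableSet_fiber c
  pos := fun s hs => (Finset.mem_filter.1 hs).2
  disj := by
    intro s hs t ht hne
    rw [Finset.mem_coe, Finset.mem_filter, Finset.mem_image] at hs ht
    obtain ⟨⟨c, -, rfl⟩, -⟩ := hs
    obtain ⟨⟨c', -, rfl⟩, -⟩ := ht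
    have hcc : c ≠ c' := fun h => hne (by rw [h])
    refine (Set.disjoint_left.2 fun x hx hx' => ?_ :)
    exact hcc (by rw [← hx, ← hx'])
  cover := by
    classical
    set bad := (g.range.image (fun c => g ⁻¹' {c})).filter (fun s => ¬ 0 < μ01 s) with hbad
    have hsub : (⋃₀ (((g.range.image (fun c => g ⁻¹' {c})).filter
        (fun s => 0 < μ01 s) : Finset (Set ℝ)) : Set (Set ℝ)))ᶜ ⊆ ⋃₀ (bad : Set (Set ℝ)) := by
      intro x hx
      have hmem : g ⁻¹' {g x} ∈ g.range.image (fun c => g ⁻¹' {c}) :=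
        Finset.mem_image.2 ⟨g x, g.mem_range_self x, rfl⟩
      by_cases hpos : 0 < μ01 (g ⁻¹' {g x})
      · exact absurd ⟨g ⁻¹' {g x}, Finset.mem_filter.2 ⟨hmem, hpos⟩, rfl⟩ hx
      · exact ⟨g ⁻¹' {g x}, Finset.mem_coe.2 (Finset.mem_filter.2 ⟨hmem, hpos⟩), rfl⟩
    refine measure_mono_null hsub ?_
    rw [Set.sUnion_eq_biUnion]
    refine (measure_biUnion_null_iff bad.countable_toSet).2 ?_
    intro s hs
    have := (Finset.mem_filter.1 (Finset.mem_coe.1 hs)).2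
    exact le_antisymm (not_lt.1 this) zero_le |>.symm ▸ rfl

lemma pconst_ptOfSimple (g : SimpleFunc ℝ ℝ) (f : L1) (hfg : ⇑f =ᵐ[μ01] ⇑g) :
    Pconst (ptOfSimple g) f := by
  intro s hs
  rw [ptOfSimple] at hs
  simp only [Finset.mem_filter, Finset.mem_image] at hs
  obtain ⟨⟨c, -, rfl⟩, -⟩ := hs
  refine ⟨c, ?_⟩
  filter_upwards [ae_restrict_of_ae hfg,
    ae_restrict_mem (g.measurableSet_fiber c)] with x h1 h2
  rw [h1]; exact h2


/-- The trivial partition. -/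
def ptTop : Pt where
  C := {Set.Icc 0 1}
  meas := by
    intro A hA
    rw [Finset.mem_singleton] at hA
    subst hA
    exact measurableSet_Icc
  pos := by
    intro A hA
    rw [Finset.mem_singleton] at hA
    subst hA
    have : μ01 (Set.Icc (0:ℝ) 1) = 1 := by
      rw [Measure.restrict_apply measurableSet_Icc, Set.inter_self, Real.volume_Icc]
      norm_num
    rw [this]
    norm_num
  disj := by
    rw [Finset.coe_singleton]
    exact Set.pairwiseDisjoint_singleton _ _
  cover := by
    rw [Finset.coe_singleton, Set.sUnion_singleton,
      Measure.restrict_apply measurableSet_Icc.compl, Set.compl_inter_self]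
    exact measure_empty

lemma weakTendsto_unique {α : Type*} (U : Ultrafilter α) (g : α → WeakSpace ℝ L1) {a b : L1}
    (ha : Filter.Tendsto g U (nhds (toWeakSpace ℝ L1 a)))
    (hb : Filter.Tendsto g U (nhds (toWeakSpace ℝ L1 b))) : a = b := by
  by_contra hne
  replace hne : a - b ≠ 0 := sub_ne_zero.2 hne
  obtain ⟨φ, hφ1, hφ⟩ := exists_dual_vector ℝ (a - b) (norm_ne_zero_iff.2 hne)
  have hc : Continuous fun x : WeakSpace ℝ L1 => φ ((toWeakSpace ℝ L1).symm x) :=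
    WeakBilin.eval_continuous _ φ
  have ha' : Filter.Tendsto (fun i => φ ((toWeakSpace ℝ L1).symm (g i))) U (nhds (φ a)) := by
    have := (hc.tendsto _).comp ha
    simpa [Function.comp_def] using this
  have hb' : Filter.Tendsto (fun i => φ ((toWeakSpace ℝ L1).symm (g i))) U (nhds (φ b)) := by
    have := (hc.tendsto _).comp hb
    simpa [Function.comp_def] using this
  have heq : φ a = φ b := tendsto_nhds_unique ha' hb'
  have : φ (a - b) = 0 := by rw [map_sub, heq, sub_self]
  rw [hφ] at this
  exact hne (by rwa [← norm_eq_zero])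

lemma weakTendsto_norm_le {α : Type*} (U : Ultrafilter α) (g : α → L1) {y : L1} {c : ℝ}
    (ht : Filter.Tendsto (fun i => toWeakSpace ℝ L1 (g i)) U (nhds (toWeakSpace ℝ L1 y)))
    (hb : ∀ᶠ i in (U : Filter α), ‖g i‖ ≤ c) : ‖y‖ ≤ c := by
  rcases eq_or_ne y 0 with rfl | hy
  · rw [norm_zero]
    obtain ⟨i, hi⟩ := hb.exists
    exact le_trans (norm_nonneg _) hi
  · obtain ⟨φ, hφ1, hφ⟩ := exists_dual_vector ℝ y (norm_ne_zero_iff.2 hy)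
    have hc : Continuous fun x : WeakSpace ℝ L1 => φ ((toWeakSpace ℝ L1).symm x) :=
      WeakBilin.eval_continuous _ φ
    have ht' : Filter.Tendsto (fun i => φ (g i)) U (nhds (φ y)) := by
      have := (hc.tendsto _).comp ht
      simpa [Function.comp_def] using this
    have hle : ∀ᶠ i in (U : Filter α), φ (g i) ≤ c := by
      filter_upwards [hb] with i hi
      calc φ (g i) ≤ ‖φ (g i)‖ := le_abs_self _
        _ ≤ ‖φ‖ * ‖g i‖ := φ.le_opNorm _
        _ ≤ c := by rw [hφ1, one_mul]; exact hi
    have hfin := le_of_tendsto ht' hle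
    rwa [hφ] at hfin

section Uvec

variable (pick : L1 → L1)

/-- The approximating vector attached to a partition. -/
def uvec (P : Pt) (f : L1) : L1 :=
  ∑ A ∈ P.C.attach, (∫ x in (A : Set ℝ), f x ∂μ01) • pick (hA (P.meas A A.2))

lemma uvec_add (P : Pt) (f g : L1) :
    uvec pick P (f + g) = uvec pick P f + uvec pick P g := by
  rw [uvec, uvec, uvec, ← Finset.sum_add_distrib]
  refine Finset.sum_congr rfl fun A _ => ?_
  rw [← add_smul]
  congr 1
  have h1 : ∀ᵐ x ∂μ01.restrict (A : Set ℝ), (f + g) x = f x + g x :=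
    ae_restrict_of_ae (Lp.coeFn_add f g)
  rw [integral_congr_ae h1,
    integral_add (L1.integrable_coeFn f).integrableOn (L1.integrable_coeFn g).integrableOn]

lemma uvec_smul (P : Pt) (r : ℝ) (f : L1) :
    uvec pick P (r • f) = r • uvec pick P f := by
  rw [uvec, uvec, Finset.smul_sum]
  refine Finset.sum_congr rfl fun A _ => ?_
  rw [smul_smul]
  congr 1
  have h1 : ∀ᵐ x ∂μ01.restrict (A : Set ℝ), (r • f) x = r • f x :=
    ae_restrict_of_ae (Lp.coeFn_smul r f)
  rw [integral_congr_ae h1, integral_smul, smul_eq_mul]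

lemma norm_uvec_le (hpick : ∀ h : L1, ‖pick h‖ ≤ 1) (P : Pt) (f : L1) :
    ‖uvec pick P f‖ ≤ ‖f‖ := by
  refine le_trans (norm_sum_le _ _) (le_trans ?_ (sum_abs_integral_le P f))
  refine Finset.sum_le_sum fun A _ => ?_
  rw [norm_smul, Real.norm_eq_abs]
  calc |∫ x in (A : Set ℝ), f x ∂μ01| * ‖pick (hA (P.meas A A.2))‖
      ≤ |∫ x in (A : Set ℝ), f x ∂μ01| * 1 :=
        mul_le_mul_of_nonneg_left (hpick _) (abs_nonneg _)
    _ = _ := mul_one _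

lemma key_estimate (T S : L1 →L[ℝ] L1) {d' : ℝ}
    (hpick2 : ∀ h : L1, ‖h‖ ≤ 1 → ‖T h - S (pick h)‖ ≤ d')
    (P : Pt) (f : L1) (hPf : Pconst P f) :
    ‖T f - S (uvec pick P f)‖ ≤ d' * ‖f‖ := by
  have hrepr := repr P f hPf
  have hTf : T f = ∑ A ∈ P.C.attach,
      (∫ x in (A : Set ℝ), f x ∂μ01) • T (hA (P.meas A A.2)) := by
    conv_lhs => rw [hrepr]
    rw [map_sum]
    simp only [_root_.map_smul]
  have hSu : S (uvec pick P f) = ∑ A ∈ P.C.attach,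
      (∫ x in (A : Set ℝ), f x ∂μ01) • S (pick (hA (P.meas A A.2))) := by
    rw [uvec, map_sum]
    simp only [_root_.map_smul]
  rw [hTf, hSu, ← Finset.sum_sub_distrib]
  simp only [← smul_sub]
  refine le_trans (norm_sum_le _ _) ?_
  have hstep : ∀ A ∈ P.C.attach,
      ‖(∫ x in (A : Set ℝ), f x ∂μ01) • (T (hA (P.meas A A.2)) - S (pick (hA (P.meas A A.2))))‖
        ≤ |∫ x in (A : Set ℝ), f x ∂μ01| * d' := by
    intro A _
    rw [norm_smul, Real.norm_eq_abs]
    exact mul_le_mul_of_nonneg_left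
      (hpick2 _ (le_of_eq (norm_hA (P.meas A A.2) (P.pos A A.2)))) (abs_nonneg _)
  refine le_trans (Finset.sum_le_sum hstep) ?_
  rw [← Finset.sum_mul, mul_comm]
  have hd0 : 0 ≤ d' := le_trans (norm_nonneg _) (hpick2 0 (by simp))
  exact mul_le_mul_of_nonneg_left (sum_abs_integral_le P f) hd0

end Uvec

end StepAux


set_option maxHeartbeats 4000000 in
open StepAux in
/-- **First step of the proposition.** If `T, S ∈ L(L₁)` with `S` weakly compact and
`ε > 0` satisfies `d(T(B_{L₁}), S(B_{L₁})) < ε`, then there is `T₁ ∈ L(L₁)` with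
`‖T - T₁‖ < ε` and `T₁(B_{L₁})` contained in the norm closure of `S(B_{L₁})`. -/
theorem approx_by_operator_into_closure_of_image
    (T S : L1 →L[ℝ] L1) (hS : IsWeaklyCompactOp S) (ε : ℝ) (hε : 0 < ε)
    (hd : setDist' (⇑T '' closedBall 0 1) (⇑S '' closedBall 0 1) < ε) :
    ∃ T₁ : L1 →L[ℝ] L1, ‖T - T₁‖ < ε ∧
      ⇑T₁ '' closedBall 0 1 ⊆ closure (⇑S '' closedBall 0 1) := by
  classical
  set d' : ℝ := (setDist' (⇑T '' closedBall 0 1) (⇑S '' closedBall 0 1) + ε)/2 with hd'def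
  have hd'lt : d' < ε := by rw [hd'def]; linarith
  have hS0 : (0 : L1) ∈ ⇑S '' closedBall 0 1 :=
    ⟨0, mem_closedBall_self zero_le_one, map_zero S⟩
  have key : ∀ h : L1, ‖h‖ ≤ 1 → ∃ x : L1, ‖x‖ ≤ 1 ∧ ‖T h - S x‖ ≤ d' := by
    intro h hh
    have hmem : T h ∈ ⇑T '' closedBall 0 1 := ⟨h, mem_closedBall_zero_iff.2 hh, rfl⟩
    have hbddB : BddBelow ((fun y => ‖T h - y‖) '' (⇑S '' closedBall 0 1)) := by
      refine ⟨0, ?_⟩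
      rintro v ⟨y, -, rfl⟩
      exact norm_nonneg _
    have hbddA : BddAbove ((fun x => sInf ((fun y => ‖x - y‖) '' (⇑S '' closedBall 0 1))) ''
        (⇑T '' closedBall 0 1)) := by
      refine ⟨‖T‖, ?_⟩
      rintro v ⟨x, ⟨w, hw, rfl⟩, rfl⟩
      have hb : BddBelow ((fun y => ‖T w - y‖) '' (⇑S '' closedBall 0 1)) := by
        refine ⟨0, ?_⟩
        rintro v ⟨y, -, rfl⟩
        exact norm_nonneg _
      have h0mem : ‖T w - 0‖ ∈ (fun y => ‖T w - y‖) '' (⇑S '' closedBall 0 1) :=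
        ⟨0, hS0, rfl⟩
      refine le_trans (csInf_le hb h0mem) ?_
      rw [sub_zero]
      refine le_trans (T.le_opNorm w) ?_
      exact mul_le_of_le_one_right (norm_nonneg _) (mem_closedBall_zero_iff.1 hw)
    have h1 : sInf ((fun y => ‖T h - y‖) '' (⇑S '' closedBall 0 1))
        ≤ setDist' (⇑T '' closedBall 0 1) (⇑S '' closedBall 0 1) := by
      rw [setDist']
      exact le_csSup hbddA ⟨T h, hmem, rfl⟩
    have h2 : sInf ((fun y => ‖T h - y‖) '' (⇑S '' closedBall 0 1)) < d' :=
      lt_of_le_of_lt h1 (by rw [hd'def]; linarith)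
    obtain ⟨v, hvmem, hvlt⟩ := (csInf_lt_iff hbddB ⟨‖T h - 0‖, 0, hS0, rfl⟩).1 h2
    obtain ⟨y, hy, rfl⟩ := hvmem
    obtain ⟨x, hx, rfl⟩ := hy
    exact ⟨x, mem_closedBall_zero_iff.1 hx, hvlt.le⟩
  have key' : ∀ h : L1, ∃ x : L1, ‖x‖ ≤ 1 ∧ (‖h‖ ≤ 1 → ‖T h - S x‖ ≤ d') := by
    intro h
    by_cases hh : ‖h‖ ≤ 1
    · obtain ⟨x, h1, h2⟩ := key h hh
      exact ⟨x, h1, fun _ => h2⟩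
    · exact ⟨0, by simp, fun hc => absurd hc hh⟩
  choose pick hpick1 hpick2 using key'
  have hd'0 : 0 ≤ d' := le_trans (norm_nonneg _) (hpick2 0 (by simp))
  -- the filter of partitions
  set 𝒢 : Set (Set Pt) :=
    (fun f : L1 => {P : Pt | Pconst P f}) ''
      {f : L1 | ∃ g : Lp.simpleFunc ℝ 1 μ01, (g : L1) = f} with h𝒢
  have hFIPaux : ∀ t : Set (Set Pt), t.Finite → t ⊆ 𝒢 → ∃ P : Pt, ∀ R ∈ t, P ∈ R := by
    intro t htf
    refine Set.Finite.induction_on t htf ?_ ?_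
    · exact fun _ => ⟨ptTop, fun R hR => absurd hR (Set.notMem_empty R)⟩
    · rintro R t' hRt' ht'f ih hsub
      obtain ⟨P', hP'⟩ := ih (fun x hx => hsub (Set.mem_insert_of_mem _ hx))
      obtain ⟨f, ⟨g, hgf⟩, rfl⟩ := hsub (Set.mem_insert _ _)
      have haef : ⇑f =ᵐ[μ01] ⇑(Lp.simpleFunc.toSimpleFunc g) := by
        rw [← hgf]
        exact (Lp.simpleFunc.toSimpleFunc_eq_toFun g).symm
      have hQ₀ : Pconst (ptOfSimple (Lp.simpleFunc.toSimpleFunc g)) f :=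
        pconst_ptOfSimple _ _ haef
      refine ⟨refinePt P' (ptOfSimple (Lp.simpleFunc.toSimpleFunc g)), ?_⟩
      intro R hR
      rcases Set.mem_insert_iff.1 hR with hR | hR
      · subst hR
        exact pconst_refine_right P' hQ₀
      · obtain ⟨f'', ⟨g'', hg''⟩, rfl⟩ := hsub (Set.mem_insert_of_mem _ hR)
        exact pconst_refine_left _ (hP' _ hR)
  have hgen : (Filter.generate 𝒢).NeBot := by
    refine Filter.generate_neBot_iff.2 fun t hts htf => ?_
    obtain ⟨P, hP⟩ := hFIPaux t htf hts
    exact ⟨P, Set.mem_sInter.2 hP⟩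
  haveI := hgen
  set U : Ultrafilter Pt := Ultrafilter.of (Filter.generate 𝒢) with hU
  have hUle : (U : Filter Pt) ≤ Filter.generate 𝒢 := Ultrafilter.of_le _
  -- compactness and limits
  set K : Set (WeakSpace ℝ L1) :=
    closure ((fun x => toWeakSpace ℝ L1 (S x)) '' closedBall 0 1) with hK
  have hKcomp : IsCompact K := hS
  have hmemK : ∀ (f : L1) (P : Pt), toWeakSpace ℝ L1 (S (uvec pick P f)) ∈
      (fun y : WeakSpace ℝ L1 => (max ‖f‖ 1) • y) '' K := by
    intro f P
    have hc0 : (0:ℝ) < max ‖f‖ 1 := lt_of_lt_of_le one_pos (le_max_right _ _)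
    have hu : ‖(max ‖f‖ 1)⁻¹ • uvec pick P f‖ ≤ 1 := by
      rw [norm_smul, norm_inv, Real.norm_eq_abs, abs_of_pos hc0, ← div_eq_inv_mul,
        div_le_one hc0]
      exact le_trans (norm_uvec_le pick hpick1 P f) (le_max_left _ _)
    refine ⟨toWeakSpace ℝ L1 (S ((max ‖f‖ 1)⁻¹ • uvec pick P f)),
      subset_closure ⟨_, mem_closedBall_zero_iff.2 hu, rfl⟩, ?_⟩
    show (max ‖f‖ 1) • toWeakSpace ℝ L1 (S ((max ‖f‖ 1)⁻¹ • uvec pick P f))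
        = toWeakSpace ℝ L1 (S (uvec pick P f))
    rw [← _root_.map_smul (toWeakSpace ℝ L1), ← _root_.map_smul S, smul_smul,
      mul_inv_cancel₀ hc0.ne', one_smul]
  have hlim : ∀ f : L1, ∃ y : L1,
      Filter.Tendsto (fun P => toWeakSpace ℝ L1 (S (uvec pick P f))) U
        (nhds (toWeakSpace ℝ L1 y))
      ∧ toWeakSpace ℝ L1 y ∈ (fun z : WeakSpace ℝ L1 => (max ‖f‖ 1) • z) '' K := by
    intro f
    have hcpt : IsCompact ((fun z : WeakSpace ℝ L1 => (max ‖f‖ 1) • z) '' K) :=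
      hKcomp.image (continuous_const_smul _)
    have hmem' : (fun z : WeakSpace ℝ L1 => (max ‖f‖ 1) • z) '' K ∈
        (U.map (fun P => toWeakSpace ℝ L1 (S (uvec pick P f)))) :=
      Filter.mem_map.2 (Filter.univ_mem' fun P => hmemK f P)
    obtain ⟨y', hy'mem, hy'le⟩ := hcpt.ultrafilter_le_nhds' _ hmem'
    refine ⟨(toWeakSpace ℝ L1).symm y', ?_, ?_⟩
    · rw [LinearEquiv.apply_symm_apply]
      exact hy'le
    · rw [LinearEquiv.apply_symm_apply]
      exact hy'mem
  choose T₁f htendall hmemall using hlim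
  have hadd : ∀ f g : L1, T₁f (f + g) = T₁f f + T₁f g := by
    intro f g
    refine weakTendsto_unique U _ (htendall (f + g)) ?_
    have h1 := (htendall f).add (htendall g)
    have heq : (fun P => toWeakSpace ℝ L1 (S (uvec pick P f))
          + toWeakSpace ℝ L1 (S (uvec pick P g)))
        = fun P => toWeakSpace ℝ L1 (S (uvec pick P (f + g))) := by
      funext P
      rw [uvec_add, map_add, map_add]
    rw [heq] at h1
    rw [map_add]
    exact h1
  have hsmulT : ∀ (r : ℝ) (f : L1), T₁f (r • f) = r • T₁f f := by
    intro r f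
    refine weakTendsto_unique U _ (htendall (r • f)) ?_
    have h1 := (htendall f).const_smul r
    have heq : (fun P => r • toWeakSpace ℝ L1 (S (uvec pick P f)))
        = fun P => toWeakSpace ℝ L1 (S (uvec pick P (r • f))) := by
      funext P
      rw [uvec_smul, _root_.map_smul, _root_.map_smul]
    rw [heq] at h1
    rw [_root_.map_smul]
    exact h1
  have hbnd : ∀ f : L1, ‖T₁f f‖ ≤ ‖S‖ * ‖f‖ := by
    intro f
    refine weakTendsto_norm_le U (fun P => S (uvec pick P f)) (htendall f) ?_
    refine Filter.univ_mem' fun P => ?_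
    refine le_trans (S.le_opNorm _) ?_
    exact mul_le_mul_of_nonneg_left (norm_uvec_le pick hpick1 P f) (norm_nonneg _)
  set T₁lin : L1 →ₗ[ℝ] L1 :=
    { toFun := T₁f, map_add' := hadd, map_smul' := hsmulT } with hT₁lin
  set T₁ : L1 →L[ℝ] L1 := T₁lin.mkContinuous ‖S‖ hbnd with hT₁def
  have hT₁app : ∀ f, T₁ f = T₁f f := fun f => rfl
  have hest : ∀ f : L1, (∃ g : Lp.simpleFunc ℝ 1 μ01, (g : L1) = f) →
      ‖(T - T₁) f‖ ≤ d' * ‖f‖ := by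
    rintro f hf
    have hmemU : {P : Pt | Pconst P f} ∈ (U : Filter Pt) :=
      hUle (Filter.mem_generate_of_mem ⟨f, hf, rfl⟩)
    rw [ContinuousLinearMap.sub_apply, hT₁app]
    refine weakTendsto_norm_le U (fun P => T f - S (uvec pick P f)) ?_ ?_
    · have h1 := Filter.Tendsto.const_sub (toWeakSpace ℝ L1 (T f)) (htendall f)
      have heq : (fun P => toWeakSpace ℝ L1 (T f) - toWeakSpace ℝ L1 (S (uvec pick P f)))
          = fun P => toWeakSpace ℝ L1 (T f - S (uvec pick P f)) := by
        funext P
        rw [map_sub]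
      rw [heq] at h1
      rw [map_sub]
      exact h1
    · filter_upwards [hmemU] with P hP
      exact key_estimate pick T S (fun h hh => hpick2 h hh) P f hP
  have hall : ∀ f : L1, ‖(T - T₁) f‖ ≤ d' * ‖f‖ := by
    have hclosed : IsClosed {f : L1 | ‖(T - T₁) f‖ ≤ d' * ‖f‖} :=
      isClosed_le ((T - T₁).continuous.norm) (continuous_const.mul continuous_norm)
    intro f
    refine DenseRange.induction_on (Lp.simpleFunc.denseRange ENNReal.one_ne_top) f hclosed ?_
    intro g
    exact hest _ ⟨g, rfl⟩
  have hnorm : ‖T - T₁‖ ≤ d' := ContinuousLinearMap.opNorm_le_bound _ hd'0 hall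
  refine ⟨T₁, lt_of_le_of_lt hnorm hd'lt, ?_⟩
  rintro y ⟨f, hf, rfl⟩
  have hf1 : ‖f‖ ≤ 1 := mem_closedBall_zero_iff.1 hf
  have hmax : max ‖f‖ 1 = 1 := max_eq_right hf1
  have hmem := hmemall f
  rw [hmax] at hmem
  have hK1 : (fun z : WeakSpace ℝ L1 => (1:ℝ) • z) '' K = K := by
    simp [Set.image_id']
  rw [hK1] at hmem
  have hconv : Convex ℝ (⇑S '' closedBall 0 1) :=
    (convex_closedBall (0:L1) 1).linear_image (S : L1 →ₗ[ℝ] L1)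
  have hmazur := hconv.toWeakSpace_closure (𝕜 := ℝ)
  have himg : (fun x => toWeakSpace ℝ L1 (S x)) '' closedBall 0 1
      = toWeakSpace ℝ L1 '' (⇑S '' closedBall 0 1) := by
    rw [Set.image_image]
  rw [hK, himg, ← hmazur] at hmem
  obtain ⟨z, hz, hzeq⟩ := hmem
  have hzf : z = T₁f f := (toWeakSpace ℝ L1).injective hzeq
  rw [hT₁app, ← hzf]
  exact hz
end
end

section
/- For every real number p with 2 ≤ p < ∞ there exists a constant D_p > 0 with the following property: for every probability space (Ω, μ), every finite sequence f_1, …, f_n of independent real random variables on Ω with ∫ f_k dμ = 0 and f_k ∈ L^p(μ) for each k, and all real scalars a_1, …, a_n, one has ‖∑_{k=1}^n a_k f_k‖_{L^p(μ)} ≤ D_p · (∑_{k=1}^n a_k^2 · ‖f_k‖_{L^p(μ)}^2)^{1/2}. -/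
open MeasureTheory ProbabilityTheory

noncomputable section

/-- pointwise Taylor-type bound -/
lemma ptwise (p : ℝ) (hp : 2 ≤ p) (x y : ℝ) :
    |x + y| ^ p ≤ |x| ^ p + p * (|x| ^ (p-2) * x) * y
      + 2 * (3*p)^p * (|x| ^ (p-2) * |y| ^ (2:ℝ) + |y| ^ p) := by
  have hp0 : (0:ℝ) < p := by linarith
  have hc2 : (1:ℝ) ≤ (3*p)^p := by
    rw [show (1:ℝ) = 1 ^ p by rw [Real.one_rpow]]
    exact Real.rpow_le_rpow (by norm_num) (by linarith) hp0.le
  -- reduce to the case 0 ≤ x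
  suffices H : ∀ x y : ℝ, 0 ≤ x → |x + y| ^ p ≤ |x| ^ p + p * (|x| ^ (p-2) * x) * y
      + 2 * (3*p)^p * (|x| ^ (p-2) * |y| ^ (2:ℝ) + |y| ^ p) by
    rcases le_or_gt 0 x with hx | hx
    · exact H x y hx
    · have h := H (-x) (-y) (by linarith)
      rw [show -x + -y = -(x+y) by ring, abs_neg (x+y), abs_neg x, abs_neg y] at h
      have e : p * (|x| ^ (p-2) * -x) * -y = p * (|x| ^ (p-2) * x) * y := by ring
      rw [e] at h
      exact h
  clear x y
  intro x y hx
  rcases eq_or_ne y 0 with rfl | hy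
  · have h1 : (0:ℝ) ≤ |x| ^ (p-2) * |(0:ℝ)| ^ (2:ℝ) + |(0:ℝ)| ^ p := by positivity
    have h2 : (0:ℝ) ≤ 2 * (3*p)^p := by positivity
    simp only [add_zero, mul_zero, zero_mul]
    nlinarith [mul_nonneg h2 h1]
  rcases le_or_gt (2*p*|y|) x with hS | hL
  · -- small y case; x > 0
    have hxpos : 0 < x := lt_of_lt_of_le (by positivity) hS
    set u := y / x with hu
    have hau : |u| ≤ 1/(2*p) := by
      rw [hu, abs_div, abs_of_pos hxpos, div_le_div_iff₀ hxpos (by positivity)]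
      calc |y| * (2*p) = 2*p*|y| := by ring
        _ ≤ x := hS
        _ = 1 * x := (one_mul x).symm
    have hpu : |p * u| ≤ 1 := by
      rw [abs_mul, abs_of_pos hp0]
      have h12 : p * (1/(2*p)) = 1/2 := by field_simp
      calc p * |u| ≤ p * (1/(2*p)) := by nlinarith
        _ = 1/2 := h12
        _ ≤ 1 := by norm_num
    have h1u : (0:ℝ) < 1 + u := by
      have h1 : -(1/(2*p)) ≤ u := (abs_le.1 hau).1
      have : 1/(2*p) ≤ 1/2 := by
        rw [div_le_div_iff₀ (by positivity) (by norm_num)]; linarith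
      linarith
    -- (1+u)^p ≤ exp(p u) ≤ 1 + p u + (p u)^2
    have key : (1+u) ^ p ≤ 1 + p*u + (p*u)^2 := by
      have e1 : (1+u) ^ p ≤ Real.exp u ^ p :=
        Real.rpow_le_rpow h1u.le (by linarith [Real.add_one_le_exp u]) hp0.le
      have e2 : Real.exp u ^ p = Real.exp (p * u) := by
        rw [Real.rpow_def_of_pos (Real.exp_pos u), Real.log_exp, mul_comm]
      have e3 : Real.exp (p*u) ≤ 1 + p*u + (p*u)^2 := by
        have h := Real.exp_bound hpu (n := 2) (by norm_num)
        simp [Finset.sum_range_succ] at h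
        have h2 := (abs_le.1 h).2
        have h3 : (|p| * |u|) ^ 2 = (p*u)^2 := by rw [← abs_mul, sq_abs]
        nlinarith [sq_nonneg (p*u)]
      calc (1+u)^p ≤ Real.exp u ^ p := e1
        _ = Real.exp (p*u) := e2
        _ ≤ 1 + p*u + (p*u)^2 := e3
    have hxy : x + y = x * (1+u) := by rw [hu, mul_add, mul_one, mul_div_cancel₀ y hxpos.ne']
    have expand : |x + y| ^ p = x ^ p * (1+u) ^ p := by
      rw [hxy, abs_of_pos (by nlinarith), Real.mul_rpow hx h1u.le]
    have hx1 : x ^ (p-2) * x = x ^ (p-1) := by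
      rw [← Real.rpow_add_one hxpos.ne']; ring_nf
    have hx2 : x ^ (p-1) * x = x ^ p := by
      rw [← Real.rpow_add_one hxpos.ne']; ring_nf
    have hxpu : x ^ p * u = x ^ (p-1) * y := by
      rw [← hx2, hu]; field_simp
    have hxpu2 : x ^ p * u^2 = x ^ (p-2) * y^2 := by
      have h3 : x ^ (p-2) * x * x = x ^ p := by rw [hx1, hx2]
      rw [← h3, hu]; field_simp
    have hy2 : |y| ^ (2:ℝ) = y^2 := by
      rw [show (2:ℝ) = ((2:ℕ):ℝ) by norm_cast, Real.rpow_natCast, sq_abs]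
    have hcp : p^2 ≤ 2 * (3*p)^p := by
      have h4 : (3*p)^(2:ℝ) ≤ (3*p)^p := Real.rpow_le_rpow_of_exponent_le (by linarith) hp
      have h9 : (3*p)^(2:ℝ) = 9*p^2 := by
        rw [show (2:ℝ) = ((2:ℕ):ℝ) by norm_cast, Real.rpow_natCast]; ring
      rw [h9] at h4
      nlinarith [sq_nonneg p, h4]
    have habs : |x| = x := abs_of_nonneg hx
    have hxppos : (0:ℝ) ≤ x ^ p := Real.rpow_nonneg hx p
    have hS0 : (0:ℝ) ≤ x ^ (p-2) * y^2 :=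
      mul_nonneg (Real.rpow_nonneg hx _) (sq_nonneg y)
    calc |x+y| ^ p = x ^ p * (1+u)^p := expand
      _ ≤ x ^ p * (1 + p*u + (p*u)^2) := by
          apply mul_le_mul_of_nonneg_left key hxppos
      _ = x ^ p + p * (x^p*u) + p^2 * (x^p*u^2) := by ring
      _ = x ^ p + p * (x ^ (p-2) * x) * y + p^2 * (x^(p-2) * y^2) := by
          rw [hxpu, hxpu2, hx1]; ring
      _ ≤ |x| ^ p + p * (|x| ^ (p-2) * x) * y
          + 2 * (3*p)^p * (|x| ^ (p-2) * |y| ^ (2:ℝ) + |y| ^ p) := by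
          rw [habs, hy2]
          have f1 := mul_le_mul_of_nonneg_right hcp hS0
          have f2 : (0:ℝ) ≤ 2 * (3*p)^p * |y| ^ p := by positivity
          nlinarith [f1, f2]
  · -- large y case
    have hyy : 0 < |y| := abs_pos.2 hy
    have hxley : x ≤ 2*p*|y| := hL.le
    have habs : |x| = x := abs_of_nonneg hx
    have hyp1y : |y| ^ (p-1) * |y| = |y| ^ p := by
      rw [← Real.rpow_add_one hyy.ne']; ring_nf
    have hyppos : (0:ℝ) ≤ |y| ^ p := Real.rpow_nonneg (abs_nonneg y) p
    have lhs_le : |x+y| ^ p ≤ (2*p+1)^p * |y| ^ p := by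
      have h1 : |x+y| ≤ (2*p+1) * |y| := by
        calc |x+y| ≤ |x| + |y| := abs_add_le x y
          _ ≤ 2*p*|y| + |y| := by rw [habs]; linarith
          _ = (2*p+1)*|y| := by ring
      calc |x+y| ^ p ≤ ((2*p+1)*|y|) ^ p :=
            Real.rpow_le_rpow (abs_nonneg _) h1 (by linarith)
        _ = (2*p+1)^p * |y| ^ p := Real.mul_rpow (by linarith) (abs_nonneg y)
    have lin_bd : |p * (x ^ (p-2) * x) * y| ≤ p * (2*p)^(p-1) * |y|^p := by
      have hx1 : x ^ (p-2) * x ≤ (2*p*|y|) ^ (p-1) := by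
        have hpow : x ^ (p-2) * x = x ^ (p-1) := by
          rcases eq_or_lt_of_le hx with h0 | hxpos
          · rw [← h0, mul_zero, Real.zero_rpow (by intro h; linarith [h] : p - 1 ≠ 0)]
          · rw [← Real.rpow_add_one (ne_of_gt hxpos)]; ring_nf
        rw [hpow]
        exact Real.rpow_le_rpow hx hxley (by linarith)
      have h2 : (2*p*|y|) ^ (p-1) = (2*p)^(p-1) * |y|^(p-1) :=
        Real.mul_rpow (by linarith) (abs_nonneg y)
      have hnn : 0 ≤ x ^ (p-2) * x := mul_nonneg (Real.rpow_nonneg hx _) hx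
      rw [abs_mul, abs_mul, abs_of_pos hp0, abs_of_nonneg hnn]
      calc p * (x ^ (p-2) * x) * |y| ≤ p * ((2*p)^(p-1) * |y|^(p-1)) * |y| := by
            have h5 := mul_le_mul_of_nonneg_left (hx1.trans_eq h2) hp0.le
            exact mul_le_mul_of_nonneg_right h5 (abs_nonneg y)
        _ = p * (2*p)^(p-1) * (|y|^(p-1) * |y|) := by ring
        _ = p * (2*p)^(p-1) * |y|^p := by rw [hyp1y]
    have c1 : (2*p+1)^p ≤ (3*p)^p :=
      Real.rpow_le_rpow (by linarith) (by linarith) (by linarith)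
    have c2 : p * (2*p)^(p-1) ≤ (3*p)^p := by
      have h1 : (2*p)^(p-1) * (2*p) = (2*p)^p := by
        rw [← Real.rpow_add_one (by positivity : (2*p) ≠ 0)]; ring_nf
      have h2 : (2*p)^p ≤ (3*p)^p :=
        Real.rpow_le_rpow (by linarith) (by linarith) (by linarith)
      have h3 : 0 ≤ (2*p)^(p-1) := Real.rpow_nonneg (by linarith) _
      nlinarith
    have c1y := mul_le_mul_of_nonneg_right c1 hyppos
    have c2y := mul_le_mul_of_nonneg_right c2 hyppos
    have hxp' : (0:ℝ) ≤ x ^ p := Real.rpow_nonneg hx p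
    have hprod : (0:ℝ) ≤ 2*(3*p)^p * (x^(p-2) * |y|^(2:ℝ)) := by positivity
    have hlin := (abs_le.1 lin_bd).1
    rw [habs]
    nlinarith [lhs_le, c1y, c2y, hlin, hxp', hprod]


variable {Ω : Type*} [MeasurableSpace Ω]

lemma moment_eq (μ : Measure Ω) (r : ℝ) (hr : 0 < r)
    (g : Ω → ℝ) (hg : MemLp g (ENNReal.ofReal r) μ) :
    ∫ ω, |g ω| ^ r ∂μ = ((eLpNorm g (ENNReal.ofReal r) μ).toReal) ^ r := by
  have h := hg.eLpNorm_eq_integral_rpow_norm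
    (by simp [ENNReal.ofReal_eq_zero]; linarith) ENNReal.ofReal_ne_top
  rw [ENNReal.toReal_ofReal hr.le] at h
  have hnn : (0:ℝ) ≤ (∫ a, ‖g a‖ ^ r ∂μ) ^ r⁻¹ :=
    Real.rpow_nonneg (integral_nonneg fun a => by positivity) _
  rw [h, ENNReal.toReal_ofReal hnn,
    Real.rpow_inv_rpow (integral_nonneg fun a => by positivity) (by linarith)]
  simp [Real.norm_eq_abs]

lemma moment_le (μ : Measure Ω) [IsProbabilityMeasure μ] (p r : ℝ)
    (hr : 0 ≤ r) (hrp : r ≤ p) (hp : 0 < p) (g : Ω → ℝ)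
    (hg : MemLp g (ENNReal.ofReal p) μ) :
    ∫ ω, |g ω| ^ r ∂μ ≤ ((eLpNorm g (ENNReal.ofReal p) μ).toReal) ^ r := by
  rcases eq_or_lt_of_le hr with h0 | hrpos
  · simp [← h0]
  · have hmem : MemLp g (ENNReal.ofReal r) μ :=
      hg.mono_exponent (ENNReal.ofReal_le_ofReal hrp)
    rw [moment_eq μ r hrpos g hmem]
    apply Real.rpow_le_rpow ENNReal.toReal_nonneg _ hr
    have hle : eLpNorm g (ENNReal.ofReal r) μ ≤ eLpNorm g (ENNReal.ofReal p) μ :=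
      eLpNorm_le_eLpNorm_of_exponent_le (ENNReal.ofReal_le_ofReal hrp)
        hg.aestronglyMeasurable
    exact ENNReal.toReal_mono hg.eLpNorm_ne_top hle

lemma abs_rpow_mul (p : ℝ) (hp : 2 ≤ p) (x : ℝ) : |(|x| ^ (p-2) * x)| = |x| ^ (p-1) := by
  rcases eq_or_ne x 0 with rfl | hx
  · simp [Real.zero_rpow (by intro h; linarith [h] : p - 1 ≠ 0)]
  · rw [abs_mul, abs_of_nonneg (Real.rpow_nonneg (abs_nonneg x) _),
      ← Real.rpow_add_one (abs_ne_zero.2 hx)]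
    ring_nf

lemma one_step (μ : Measure Ω) [IsProbabilityMeasure μ]
    (p : ℝ) (hp : 2 ≤ p) (X Y : Ω → ℝ) (hXm : Measurable X) (hYm : Measurable Y)
    (hind : IndepFun X Y μ) (hY0 : ∫ ω, Y ω ∂μ = 0)
    (hX : MemLp X (ENNReal.ofReal p) μ) (hY : MemLp Y (ENNReal.ofReal p) μ) :
    ∫ ω, |X ω + Y ω| ^ p ∂μ ≤ (∫ ω, |X ω| ^ p ∂μ)
      + 2*(3*p)^p * (((eLpNorm X (ENNReal.ofReal p) μ).toReal)^(p-2)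
          * ((eLpNorm Y (ENNReal.ofReal p) μ).toReal)^(2:ℝ) + ∫ ω, |Y ω| ^ p ∂μ) := by
  have hp0 : (0:ℝ) < p := by linarith
  have htr : (ENNReal.ofReal p).toReal = p := ENNReal.toReal_ofReal hp0.le
  -- integrability facts
  have iXp : Integrable (fun ω => |X ω| ^ p) μ := by
    simpa [Real.norm_eq_abs, htr] using hX.integrable_norm_rpow'
  have iYp : Integrable (fun ω => |Y ω| ^ p) μ := by
    simpa [Real.norm_eq_abs, htr] using hY.integrable_norm_rpow'
  have iXYp : Integrable (fun ω => |X ω + Y ω| ^ p) μ := by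
    simpa [Real.norm_eq_abs, htr] using (hX.add hY).integrable_norm_rpow'
  have iXq : Integrable (fun ω => |X ω| ^ (p-2)) μ := by
    have hmem : MemLp X (ENNReal.ofReal (p-2)) μ :=
      hX.mono_exponent (ENNReal.ofReal_le_ofReal (by linarith))
    simpa [Real.norm_eq_abs, ENNReal.toReal_ofReal (by linarith : (0:ℝ) ≤ p - 2)]
      using hmem.integrable_norm_rpow'
  have iY2 : Integrable (fun ω => |Y ω| ^ (2:ℝ)) μ := by
    have hmem : MemLp Y (ENNReal.ofReal 2) μ :=
      hY.mono_exponent (ENNReal.ofReal_le_ofReal hp)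
    simpa [Real.norm_eq_abs, ENNReal.toReal_ofReal (by norm_num : (0:ℝ) ≤ 2)]
      using hmem.integrable_norm_rpow'
  have iY : Integrable Y μ := by
    have hmem : MemLp Y (ENNReal.ofReal 1) μ :=
      hY.mono_exponent (ENNReal.ofReal_le_ofReal (by linarith))
    rw [ENNReal.ofReal_one] at hmem
    exact memLp_one_iff_integrable.1 hmem
  have iXp1 : Integrable (fun ω => |X ω| ^ (p-1)) μ := by
    have hmem : MemLp X (ENNReal.ofReal (p-1)) μ :=
      hX.mono_exponent (ENNReal.ofReal_le_ofReal (by linarith))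
    simpa [Real.norm_eq_abs, ENNReal.toReal_ofReal (by linarith : (0:ℝ) ≤ p - 1)]
      using hmem.integrable_norm_rpow'
  -- the sign-power function
  set g : ℝ → ℝ := fun t => |t| ^ (p-2) * t with hg
  have hgmeas : Measurable g := by fun_prop
  have igX : Integrable (fun ω => g (X ω)) μ := by
    refine Integrable.mono' iXp1 ((hgmeas.comp hXm).aestronglyMeasurable) ?_
    filter_upwards with ω
    rw [Real.norm_eq_abs, hg]
    exact le_of_eq (abs_rpow_mul p hp (X ω))
  have ind1 : IndepFun (fun ω => g (X ω)) Y μ := hind.comp hgmeas measurable_id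
  have E1 : ∫ ω, g (X ω) * Y ω ∂μ = 0 := by
    rw [ind1.integral_fun_mul_eq_mul_integral ((hgmeas.comp hXm).aestronglyMeasurable)
      hYm.aestronglyMeasurable, hY0, mul_zero]
  have imul1 : Integrable (fun ω => g (X ω) * Y ω) μ := by
    have := ind1.integrable_mul igX iY
    exact this
  -- second product
  have hq2meas : Measurable (fun t : ℝ => |t| ^ (p-2)) := by fun_prop
  have hsqmeas : Measurable (fun t : ℝ => |t| ^ (2:ℝ)) := by fun_prop
  have ind2 : IndepFun (fun ω => |X ω| ^ (p-2)) (fun ω => |Y ω| ^ (2:ℝ)) μ :=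
    hind.comp hq2meas hsqmeas
  have imul2 : Integrable (fun ω => |X ω| ^ (p-2) * |Y ω| ^ (2:ℝ)) μ := by
    have := ind2.integrable_mul iXq iY2
    exact this
  have E2 : ∫ ω, |X ω| ^ (p-2) * |Y ω| ^ (2:ℝ) ∂μ
      = (∫ ω, |X ω| ^ (p-2) ∂μ) * (∫ ω, |Y ω| ^ (2:ℝ) ∂μ) :=
    ind2.integral_fun_mul_eq_mul_integral ((hq2meas.comp hXm).aestronglyMeasurable)
      ((hsqmeas.comp hYm).aestronglyMeasurable)
  -- integrate the pointwise inequality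
  have F_int : Integrable (fun ω => |X ω| ^ p + p * g (X ω) * Y ω
      + 2*(3*p)^p * (|X ω| ^ (p-2) * |Y ω| ^ (2:ℝ) + |Y ω| ^ p)) μ := by
    apply Integrable.add
    · apply iXp.add
      have : (fun ω => p * g (X ω) * Y ω) = fun ω => p * (g (X ω) * Y ω) := by
        funext ω; ring
      rw [this]
      exact imul1.const_mul p
    · exact (imul2.add iYp).const_mul _
  have hmono : ∫ ω, |X ω + Y ω| ^ p ∂μ ≤ ∫ ω, (|X ω| ^ p + p * g (X ω) * Y ω
      + 2*(3*p)^p * (|X ω| ^ (p-2) * |Y ω| ^ (2:ℝ) + |Y ω| ^ p)) ∂μ := by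
    apply integral_mono iXYp F_int
    intro ω
    exact ptwise p hp (X ω) (Y ω)
  -- compute the RHS integral
  have ic' : Integrable (fun ω => p * g (X ω) * Y ω) μ := by
    have h := imul1.const_mul p
    simpa [mul_assoc] using h
  have ia : Integrable (fun ω => |X ω| ^ p + p * g (X ω) * Y ω) μ := iXp.add ic'
  have id2 : Integrable
      (fun ω => 2*(3*p)^p * (|X ω| ^ (p-2) * |Y ω| ^ (2:ℝ) + |Y ω| ^ p)) μ :=
    (imul2.add iYp).const_mul _
  have EB : ∫ ω, p * g (X ω) * Y ω ∂μ = 0 := by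
    have e1 : (fun ω => p * g (X ω) * Y ω) = fun ω => p * (g (X ω) * Y ω) := by
      funext ω; ring
    rw [e1, integral_const_mul, E1, mul_zero]
  have hsplit : ∫ ω, (|X ω| ^ p + p * g (X ω) * Y ω
      + 2*(3*p)^p * (|X ω| ^ (p-2) * |Y ω| ^ (2:ℝ) + |Y ω| ^ p)) ∂μ
      = (∫ ω, |X ω| ^ p ∂μ)
        + 2*(3*p)^p * ((∫ ω, |X ω| ^ (p-2) ∂μ) * (∫ ω, |Y ω| ^ (2:ℝ) ∂μ)
          + ∫ ω, |Y ω| ^ p ∂μ) := by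
    rw [integral_add ia id2, integral_add iXp ic', EB, integral_const_mul,
      integral_add imul2 iYp, E2]
    ring
  rw [hsplit] at hmono
  -- bound the moments by norms
  have b1 := moment_le μ p (p-2) (by linarith) (by linarith) hp0 X hX
  have b2 := moment_le μ p 2 (by norm_num) hp (by linarith) Y hY
  have n1 : (0:ℝ) ≤ ∫ ω, |X ω| ^ (p-2) ∂μ := integral_nonneg fun ω => by positivity
  have n2 : (0:ℝ) ≤ ∫ ω, |Y ω| ^ (2:ℝ) ∂μ := integral_nonneg fun ω => by positivity
  have n3 : (0:ℝ) ≤ ((eLpNorm X (ENNReal.ofReal p) μ).toReal)^(p-2) := by positivity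
  have hc : (0:ℝ) ≤ 2*(3*p)^p := by positivity
  have hmul : (∫ ω, |X ω| ^ (p-2) ∂μ) * (∫ ω, |Y ω| ^ (2:ℝ) ∂μ)
      ≤ ((eLpNorm X (ENNReal.ofReal p) μ).toReal)^(p-2)
        * ((eLpNorm Y (ENNReal.ofReal p) μ).toReal)^(2:ℝ) :=
    mul_le_mul b1 b2 n2 n3
  nlinarith [hmono, mul_le_mul_of_nonneg_left hmul hc]

lemma convpow (q u v : ℝ) (hq : 1 ≤ q) (hu : 0 ≤ u) (hv : 0 ≤ v) :
    u^q + (u+v)^(q-1) * v ≤ (u+v)^q := by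
  have hq0 : (0:ℝ) < q := by linarith
  rcases eq_or_lt_of_le (by linarith : (0:ℝ) ≤ u + v) with h0 | huv
  · have hu0 : u = 0 := by linarith
    have hv0 : v = 0 := by linarith
    rw [hu0, hv0]
    simp [Real.zero_rpow hq0.ne']
  rcases eq_or_lt_of_le hu with h0 | hupos
  · have hv0 : 0 < v := by rw [← h0, zero_add] at huv; exact huv
    rw [← h0]
    simp only [zero_add]
    rw [Real.zero_rpow hq0.ne', zero_add, ← Real.rpow_add_one hv0.ne',
      show q - 1 + 1 = q by ring]
  · have ht : u / (u+v) ≤ 1 := by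
      rw [div_le_one huv]; linarith
    have htpos : 0 < u / (u+v) := div_pos hupos huv
    have key : (u/(u+v))^q ≤ u/(u+v) := by
      calc (u/(u+v))^q ≤ (u/(u+v))^(1:ℝ) :=
            Real.rpow_le_rpow_of_exponent_ge htpos ht hq
        _ = u/(u+v) := Real.rpow_one _
    have e1 : u ^ q = (u/(u+v))^q * (u+v)^q := by
      rw [← Real.mul_rpow (le_of_lt htpos) (le_of_lt huv)]
      congr 1
      field_simp
    have e2 : (u+v)^(q-1) * (u+v) = (u+v)^q := by
      rw [← Real.rpow_add_one huv.ne']; ring_nf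
    have e3 : (u/(u+v)) * (u+v)^q = u * (u+v)^(q-1) := by
      rw [← e2]; field_simp
    have hpow : (0:ℝ) ≤ (u+v)^q := Real.rpow_nonneg (by linarith) _
    calc u^q + (u+v)^(q-1) * v = (u/(u+v))^q * (u+v)^q + (u+v)^(q-1) * v := by rw [e1]
      _ ≤ (u/(u+v)) * (u+v)^q + (u+v)^(q-1) * v :=
          add_le_add_left (mul_le_mul_of_nonneg_right key hpow) _
      _ = u * (u+v)^(q-1) + v * (u+v)^(q-1) := by rw [e3]; ring
      _ = (u+v)^(q-1) * (u+v) := by ring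
      _ = (u+v)^q := e2

lemma numstep (p c u b SS : ℝ) (hp : 2 ≤ p) (hc : 1 ≤ c) (hu : 0 ≤ u) (hb : 0 ≤ b)
    (hS0 : 0 ≤ SS) (hSle : SS ≤ (2*c*u)^((1:ℝ)/2)) :
    SS^p + c*(SS^(p-2) * b^(2:ℝ) + b^p) ≤ (2*c*(u + b^(2:ℝ)))^(p/2) := by
  have hp0 : (0:ℝ) < p := by linarith
  have hc0 : (0:ℝ) ≤ c := by linarith
  have h2cu : (0:ℝ) ≤ 2*c*u := by nlinarith [mul_nonneg hc0 hu]
  rcases eq_or_lt_of_le hb with hb0 | hbpos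
  · -- b = 0
    rw [← hb0]
    rw [Real.zero_rpow (by norm_num : (2:ℝ) ≠ 0), Real.zero_rpow hp0.ne']
    have A1 : SS^p ≤ (2*c*u)^(p/2) := by
      calc SS^p ≤ ((2*c*u)^((1:ℝ)/2))^p :=
            Real.rpow_le_rpow hS0 hSle hp0.le
        _ = (2*c*u)^(p/2) := by
            rw [← Real.rpow_mul h2cu]; ring_nf
    simpa using A1
  set v := b^(2:ℝ) with hv
  have hvpos : 0 < v := Real.rpow_pos_of_pos hbpos _
  have huv : (0:ℝ) ≤ u + v := by linarith
  have h2cuv : (0:ℝ) ≤ 2*c*(u+v) := by nlinarith [mul_nonneg hc0 huv]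
  have A1 : SS^p ≤ (2*c*u)^(p/2) := by
    calc SS^p ≤ ((2*c*u)^((1:ℝ)/2))^p := Real.rpow_le_rpow hS0 hSle hp0.le
      _ = (2*c*u)^(p/2) := by rw [← Real.rpow_mul h2cu]; ring_nf
  have A2 : SS^(p-2) ≤ (2*c*(u+v))^((p-2)/2) := by
    calc SS^(p-2) ≤ ((2*c*u)^((1:ℝ)/2))^(p-2) :=
          Real.rpow_le_rpow hS0 hSle (by linarith)
      _ = (2*c*u)^((p-2)/2) := by rw [← Real.rpow_mul h2cu]; ring_nf
      _ ≤ (2*c*(u+v))^((p-2)/2) :=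
          Real.rpow_le_rpow h2cu (by nlinarith [mul_nonneg hc0 hvpos.le]) (by linarith)
  have A3 : b^p = v^(p/2) := by
    rw [hv, ← Real.rpow_mul hb, show (2:ℝ)*(p/2) = p by ring]
  have A4 : v^(p/2) = v^((p-2)/2) * v := by
    rw [← Real.rpow_add_one hvpos.ne']; ring_nf
  have A5 : v^((p-2)/2) ≤ (2*c*(u+v))^((p-2)/2) :=
    Real.rpow_le_rpow hvpos.le
      (by nlinarith [mul_nonneg hc0 hu,
        mul_nonneg (by linarith : (0:ℝ) ≤ 2*c-1) hvpos.le]) (by linarith)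
  -- convexity
  have hconv := convpow (p/2) (2*c*u) (2*c*v) (by linarith) h2cu (by nlinarith [mul_nonneg hc0 hvpos.le])
  have ee : 2*c*u + 2*c*v = 2*c*(u+v) := by ring
  rw [ee] at hconv
  have eq1 : (p:ℝ)/2 - 1 = (p-2)/2 := by ring
  rw [eq1] at hconv
  -- assemble
  have T := (2*c*(u+v))^((p-2)/2)
  have hT0 : (0:ℝ) ≤ (2*c*(u+v))^((p-2)/2) := Real.rpow_nonneg h2cuv _
  have m1 : SS^(p-2) * v ≤ (2*c*(u+v))^((p-2)/2) * v :=
    mul_le_mul_of_nonneg_right A2 hvpos.le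
  have m2 : b^p ≤ (2*c*(u+v))^((p-2)/2) * v := by
    rw [A3, A4]
    exact mul_le_mul_of_nonneg_right A5 hvpos.le
  calc SS^p + c*(SS^(p-2) * v + b^p)
      ≤ (2*c*u)^(p/2) + c*((2*c*(u+v))^((p-2)/2) * v + (2*c*(u+v))^((p-2)/2) * v) := by
        have : SS^(p-2) * v + b^p ≤ (2*c*(u+v))^((p-2)/2) * v + (2*c*(u+v))^((p-2)/2) * v :=
          add_le_add m1 m2
        nlinarith [this]
    _ = (2*c*u)^(p/2) + (2*c*(u+v))^((p-2)/2) * (2*c*v) := by ring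
    _ ≤ (2*c*(u+v))^(p/2) := hconv

/-- **Type-2 inequality for independent mean-zero random variables.** For every real
`2 ≤ p < ∞` there is `D_p > 0` such that for every probability space `(Ω, μ)`, every
finite sequence `f₁, …, f_n` of independent mean-zero random variables in `L^p(μ)`, and
all real scalars `a₁, …, a_n`,
`‖∑ aₖ fₖ‖_{L^p(μ)} ≤ D_p (∑ aₖ² ‖fₖ‖_{L^p(μ)}²)^{1/2}`. -/
theorem type_two_for_independent_mean_zero (p : ℝ) (hp : 2 ≤ p) :
    ∃ D : ℝ, 0 < D ∧
      ∀ (Ω : Type) [MeasurableSpace Ω] (μ : Measure Ω) [IsProbabilityMeasure μ]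
        (n : ℕ) (f : Fin n → Ω → ℝ),
        iIndepFun f μ →
        (∀ k, Measurable (f k)) →
        (∀ k, ∫ ω, f k ω ∂μ = 0) →
        (∀ k, MemLp (f k) (ENNReal.ofReal p) μ) →
        ∀ a : Fin n → ℝ,
          (eLpNorm (fun ω => ∑ k, a k * f k ω) (ENNReal.ofReal p) μ).toReal ≤
            D * Real.sqrt (∑ k, a k ^ 2 *
              ((eLpNorm (f k) (ENNReal.ofReal p) μ).toReal) ^ 2) := by
  have hp0 : (0:ℝ) < p := by linarith
  set c : ℝ := 2 * (3*p)^p with hcdef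
  have hc1 : (1:ℝ) ≤ c := by
    have : (1:ℝ) ≤ (3*p)^p := by
      rw [show (1:ℝ) = 1 ^ p by rw [Real.one_rpow]]
      exact Real.rpow_le_rpow (by norm_num) (by linarith) hp0.le
    rw [hcdef]; linarith
  have h2c : (0:ℝ) < 2*c := by linarith
  refine ⟨(2*c)^((1:ℝ)/2), Real.rpow_pos_of_pos h2c _, ?_⟩
  intro Ω _ μ _ n f hind hmeas hmean hmem a
  set q := ENNReal.ofReal p with hq
  have hq0 : q ≠ 0 := by
    rw [hq]; simp [ENNReal.ofReal_eq_zero]; linarith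
  have hqt : q ≠ ⊤ := ENNReal.ofReal_ne_top
  have main : ∀ s : Finset (Fin n),
      (eLpNorm (fun ω => ∑ k ∈ s, a k * f k ω) q μ).toReal
        ≤ (2*c*(∑ k ∈ s, a k ^ 2 * ((eLpNorm (f k) q μ).toReal) ^ 2))^((1:ℝ)/2) := by
    intro s
    induction s using Finset.cons_induction with
    | empty =>
      simp only [Finset.sum_empty]
      rw [eLpNorm_zero']
      simp only [ENNReal.toReal_zero, mul_zero]
      exact Real.rpow_nonneg (le_refl 0) _
    | cons j s hj ih =>
      set X : Ω → ℝ := fun ω => ∑ k ∈ s, a k * f k ω with hX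
      set Y : Ω → ℝ := fun ω => a j * f j ω with hY
      have hXmeas : Measurable X :=
        Finset.measurable_sum s (fun k _ => (hmeas k).const_mul (a k))
      have hYmeas : Measurable Y := (hmeas j).const_mul (a j)
      have hXmem : MemLp X q μ :=
        memLp_finsetSum s (fun k _ => (hmem k).const_mul (a k))
      have hYmem : MemLp Y q μ := (hmem j).const_mul (a j)
      have hXYmem : MemLp (fun ω => X ω + Y ω) q μ := hXmem.add hYmem
      -- independence
      have hgind : iIndepFun (fun k ω => a k * f k ω) μ := by
        have := hind.comp (g := fun k (x : ℝ) => a k * x)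
          (fun k => measurable_const_mul (a k))
        exact this
      have hindXY : IndepFun X Y μ := by
        have h := hgind.indepFun_finsetSum_of_notMem
          (fun k => (hmeas k).const_mul (a k)) hj
        have e : (∑ k ∈ s, fun ω => a k * f k ω) = X := by
          funext ω
          rw [hX]
          simp [Finset.sum_apply]
        rwa [e] at h
      have hY0 : ∫ ω, Y ω ∂μ = 0 := by
        rw [hY]
        simp only
        rw [integral_const_mul, hmean j, mul_zero]
      -- one-step bound
      have hstep := one_step μ p hp X Y hXmeas hYmeas hindXY hY0 hXmem hYmem
      -- convert moments to norms
      set nX : ℝ := (eLpNorm X q μ).toReal with hnX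
      set nY : ℝ := (eLpNorm Y q μ).toReal with hnY
      set nXY : ℝ := (eLpNorm (fun ω => X ω + Y ω) q μ).toReal with hnXY
      have mX : ∫ ω, |X ω| ^ p ∂μ = nX ^ p := moment_eq μ p hp0 X hXmem
      have mY : ∫ ω, |Y ω| ^ p ∂μ = nY ^ p := moment_eq μ p hp0 Y hYmem
      have mXY : ∫ ω, |X ω + Y ω| ^ p ∂μ = nXY ^ p :=
        moment_eq μ p hp0 (fun ω => X ω + Y ω) hXYmem
      rw [mX, mY, mXY] at hstep
      -- numeric step
      set u : ℝ := ∑ k ∈ s, a k ^ 2 * ((eLpNorm (f k) q μ).toReal) ^ 2 with hu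
      have hu0 : (0:ℝ) ≤ u := by
        rw [hu]; exact Finset.sum_nonneg fun k _ => by positivity
      have hnum := numstep p c u nY nX hp hc1 hu0 ENNReal.toReal_nonneg
        ENNReal.toReal_nonneg ih
      have hfinal : nXY ^ p ≤ (2*c*(u + nY^(2:ℝ)))^(p/2) := by
        calc nXY ^ p ≤ nX ^ p + c * (nX^(p-2) * nY^(2:ℝ) + nY ^ p) := by
              rw [hcdef]; exact hstep
          _ ≤ (2*c*(u + nY^(2:ℝ)))^(p/2) := hnum
      -- take p-th roots
      have hroot : nXY ≤ (2*c*(u + nY^(2:ℝ)))^((1:ℝ)/2) := by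
        have h2cu : (0:ℝ) ≤ 2*c*(u + nY^(2:ℝ)) := by
          have h1 : (0:ℝ) ≤ nY^(2:ℝ) := Real.rpow_nonneg ENNReal.toReal_nonneg _
          have h2 : (0:ℝ) ≤ u + nY^(2:ℝ) := by linarith
          nlinarith [mul_nonneg (show (0:ℝ) ≤ c by linarith) h2]
        calc nXY = (nXY ^ p) ^ p⁻¹ :=
              (Real.rpow_rpow_inv ENNReal.toReal_nonneg hp0.ne').symm
          _ ≤ ((2*c*(u + nY^(2:ℝ)))^(p/2)) ^ p⁻¹ :=
              Real.rpow_le_rpow (Real.rpow_nonneg ENNReal.toReal_nonneg _) hfinal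
                (by positivity)
          _ = (2*c*(u + nY^(2:ℝ)))^((1:ℝ)/2) := by
              rw [← Real.rpow_mul h2cu, show p/2 * p⁻¹ = (1:ℝ)/2 by field_simp]
      -- identify terms
      have hsumfun : (fun ω => ∑ k ∈ Finset.cons j s hj, a k * f k ω)
          = fun ω => X ω + Y ω := by
        funext ω
        rw [Finset.sum_cons, hX, hY]
        ring
      have hnY2 : nY^(2:ℝ) = a j ^ 2 * ((eLpNorm (f j) q μ).toReal) ^ 2 := by
        have e2 : eLpNorm Y q μ = ‖a j‖₊ * eLpNorm (f j) q μ := by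
          rw [show Y = a j • f j from rfl, eLpNorm_const_smul, enorm_eq_nnnorm]
        rw [show (2:ℝ) = ((2:ℕ):ℝ) by norm_cast, Real.rpow_natCast, hnY, e2,
          ENNReal.toReal_mul]
        simp [Real.norm_eq_abs, mul_pow, sq_abs]
      have hsum : ∑ k ∈ Finset.cons j s hj, a k ^ 2 * ((eLpNorm (f k) q μ).toReal) ^ 2 = u + nY^(2:ℝ) := by
        rw [Finset.sum_cons, hnY2, hu]; ring
      rw [hsumfun, hsum]
      exact hroot
  have hfin := main Finset.univ
  have hBnn : (0:ℝ) ≤ ∑ k, a k ^ 2 * ((eLpNorm (f k) q μ).toReal) ^ 2 :=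
    Finset.sum_nonneg fun k _ => by positivity
  calc (eLpNorm (fun ω => ∑ k, a k * f k ω) q μ).toReal
      ≤ (2*c*(∑ k, a k ^ 2 * ((eLpNorm (f k) q μ).toReal) ^ 2))^((1:ℝ)/2) := hfin
    _ = (2*c)^((1:ℝ)/2) * (∑ k, a k ^ 2 * ((eLpNorm (f k) q μ).toReal) ^ 2)^((1:ℝ)/2) :=
        Real.mul_rpow h2c.le hBnn
    _ = (2*c)^((1:ℝ)/2) * Real.sqrt (∑ k, a k ^ 2 * ((eLpNorm (f k) q μ).toReal) ^ 2) := by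
        rw [Real.sqrt_eq_rpow]
end
end
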